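/- Suppose a nonterminating subdivision process generates ρ-vectors with pairwise entry ratios in {4^ℓ : ℓ ∈ ℤ}, where each step either quarters ρ_0 or replaces some ρ_j (j ≥ 1) by two copies of ρ_j/4. Assume that from some step m̃ onward, the subdivided entry is never the minimal entry. Then the minimum value μ := min_j ρ_j^{(m̃)} stays constant for all m ≥ m̃, and the potential β(m) := log_4(ρ_0^{(m)}/μ) + Σ_{j=1}^{n_m} (2^{log_4(ρ_j^{(m)}/μ)} − 1) is a nonnegative integer that decreases by exactly 1 at each step; hence after finitely many steps all entries equal μ, yielding a contradiction. Consequently, the set of steps at which the minimal entry is subdivided is infinite. -/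

import Mathlib

/-- One subdivision step at index j: for j = 0 the first entry is quartered,
and for j ≥ 1 the j-th entry is replaced by two copies of its quarter. -/
def SubdivStepAt (j : ℕ) (l l' : List ℝ) : Prop :=
  (j = 0 ∧ ∃ a t, l = a :: t ∧ l' = a/4 :: t) ∨
  (1 ≤ j ∧ ∃ (pre : List ℝ) (a : ℝ) (post : List ℝ),
      pre.length = j ∧ l = pre ++ a :: post ∧ l' = pre ++ a/4 :: a/4 :: post)

noncomputable def E (μ a : ℝ) : ℕ := (Int.log 4 (a/μ)).toNat
noncomputable def f (μ b : ℝ) : ℕ := 2^(E μ b) - 1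
noncomputable def pot (μ : ℝ) : List ℝ → ℕ
  | [] => 0
  | a :: t => E μ a + (t.map (f μ)).sum

lemma Elog (μ a : ℝ) {ℓ : ℤ} (h : a/μ = (4:ℝ)^ℓ) : Int.log 4 (a/μ) = ℓ := by
  rw [h]
  have := Int.log_zpow (R := ℝ) (b := 4) (by norm_num) ℓ
  convert this using 2
  norm_num

lemma l_pos {μ a : ℝ} (hμ : 0 < μ) (hlt : μ < a) {ℓ : ℤ} (h : a/μ = (4:ℝ)^ℓ) : 1 ≤ ℓ := by
  by_contra hc
  push_neg at hc
  have h1 : (4:ℝ)^ℓ ≤ 1 := zpow_le_one_of_nonpos₀ (by norm_num) (by omega)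
  have h2 : (1:ℝ) < a/μ := (one_lt_div hμ).2 hlt
  rw [h] at h2; linarith

lemma quarter_ratio {μ a : ℝ} {ℓ : ℤ} (h : a/μ = (4:ℝ)^ℓ) : (a/4)/μ = (4:ℝ)^(ℓ-1) := by
  have : a/4/μ = (a/μ)/4 := by ring
  rw [this, h, zpow_sub₀ (by norm_num)]
  norm_num

lemma E_quarter {μ a : ℝ} (hμ : 0 < μ) (hlt : μ < a) {ℓ : ℤ} (h : a/μ = (4:ℝ)^ℓ) :
    E μ a = E μ (a/4) + 1 ∧ μ ≤ a/4 := by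
  have h1 : 1 ≤ ℓ := l_pos hμ hlt h
  have h2 := quarter_ratio h
  constructor
  · unfold E
    rw [Elog μ a h, Elog μ (a/4) h2]
    omega
  · have : (1:ℝ) ≤ (4:ℝ)^(ℓ-1) := one_le_zpow₀ (by norm_num) (by omega)
    rw [← h2] at this
    have h4 : (0:ℝ) < 4 := by norm_num
    calc μ = μ * 1 := by ring
    _ ≤ μ * (a/4/μ) := by nlinarith
    _ = a/4 := by field_simp

lemma f_quarter {μ a : ℝ} (hμ : 0 < μ) (hlt : μ < a) {ℓ : ℤ} (h : a/μ = (4:ℝ)^ℓ) :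
    f μ a = 2 * f μ (a/4) + 1 := by
  obtain ⟨hE, -⟩ := E_quarter hμ hlt h
  unfold f
  rw [hE, pow_succ]
  have := Nat.one_le_two_pow (n := E μ (a/4))
  omega

lemma step_lemma {μ : ℝ} (hμ : 0 < μ) {j : ℕ} {l l' : List ℝ}
    (hmem : μ ∈ l) (hlb : ∀ b ∈ l, μ ≤ b)
    (hrat : ∀ a ∈ l, ∃ ℓ : ℤ, a / μ = (4:ℝ)^ℓ)
    (hs : SubdivStepAt j l l')
    (hnotmin : ∀ a, l[j]? = some a → ∃ b ∈ l, b < a) :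
    μ ∈ l' ∧ (∀ b ∈ l', μ ≤ b) ∧ pot μ l' + 1 = pot μ l := by
  rcases hs with ⟨hj, a, t, hl, hl'⟩ | ⟨hj, pre, a, post, hlen, hl, hl'⟩
  · -- j = 0 case
    subst hl hl' hj
    obtain ⟨b, hb, hba⟩ := hnotmin a rfl
    have hμa : μ < a := lt_of_le_of_lt (hlb b hb) hba
    obtain ⟨ℓ, hℓ⟩ := hrat a (by simp)
    obtain ⟨hE, hq⟩ := E_quarter hμ hμa hℓ
    have hmt : μ ∈ t := by
      rcases List.mem_cons.1 hmem with h | h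
      · exact absurd h (by linarith)
      · exact h
    refine ⟨List.mem_cons_of_mem _ hmt, ?_, ?_⟩
    · intro c hc
      rcases List.mem_cons.1 hc with h | h
      · exact h ▸ hq
      · exact hlb c (List.mem_cons_of_mem _ h)
    · simp only [pot, hE]
      omega
  · -- j ≥ 1 case
    subst hl hl'
    have hget : (pre ++ a :: post)[j]? = some a := by
      rw [List.getElem?_append_right (by omega), hlen, Nat.sub_self]
      rfl
    obtain ⟨b, hb, hba⟩ := hnotmin a hget
    have hμa : μ < a := lt_of_le_of_lt (hlb b hb) hba
    obtain ⟨ℓ, hℓ⟩ := hrat a (by simp)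
    obtain ⟨hE, hq⟩ := E_quarter hμ hμa hℓ
    have hf := f_quarter hμ hμa hℓ
    obtain ⟨c, pre', rfl⟩ : ∃ c pre', pre = c :: pre' := by
      cases pre with
      | nil => simp at hlen; omega
      | cons c pre' => exact ⟨c, pre', rfl⟩
    have hmem' : μ ∈ (c :: pre') ++ a/4 :: a/4 :: post := by
      rcases List.mem_append.1 hmem with h | h
      · exact List.mem_append.2 (Or.inl h)
      · rcases List.mem_cons.1 h with h | h
        · exact absurd h (by linarith)
        · simp [h]
    refine ⟨hmem', ?_, ?_⟩
    · intro d hd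
      rcases List.mem_append.1 hd with h | h
      · exact hlb d (List.mem_append.2 (Or.inl h))
      · rcases List.mem_cons.1 h with h | h
        · exact h ▸ hq
        · rcases List.mem_cons.1 h with h | h
          · exact h ▸ hq
          · exact hlb d (by simp [h])
    · simp only [pot, List.cons_append, List.map_append, List.sum_append, List.map_cons,
        List.sum_cons]
      omega

lemma exists_min : ∀ (l : List ℝ), l ≠ [] → ∃ μ ∈ l, ∀ b ∈ l, μ ≤ b := by
  intro l
  induction l with
  | nil => exact fun h => absurd rfl h
  | cons a t ih =>
    intro _
    cases t with
    | nil => exact ⟨a, by simp⟩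
    | cons c s =>
      obtain ⟨μ, hμm, hμl⟩ := ih (by simp)
      rcases le_total a μ with h1 | h1
      · refine ⟨a, by simp, fun b hb => ?_⟩
        rcases List.mem_cons.1 hb with h | h
        · exact le_of_eq h.symm
        · exact le_trans h1 (hμl b h)
      · exact ⟨μ, List.mem_cons_of_mem _ hμm, fun b hb => by
          rcases List.mem_cons.1 hb with h | h
          · exact h ▸ h1
          · exact hμl b h⟩

lemma step_ne {j : ℕ} {l l' : List ℝ} (hs : SubdivStepAt j l l') : l ≠ [] := by
  rcases hs with ⟨-, a, t, hl, -⟩ | ⟨-, pre, a, post, -, hl, -⟩ <;> subst hl <;> simp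

theorem min_entry_subdivided_infinitely_often (ρ : ℕ → List ℝ) (k : ℕ → ℕ)
    (hne : ρ 0 ≠ [])
    (hpos : ∀ m, ∀ a ∈ ρ m, (0:ℝ) < a)
    (hratio : ∀ m, ∀ a ∈ ρ m, ∀ b ∈ ρ m, ∃ ℓ : ℤ, a / b = (4:ℝ)^ℓ)
    (hstep : ∀ m, SubdivStepAt (k m) (ρ m) (ρ (m+1))) :
    Set.Infinite {m : ℕ | ∃ a, (ρ m)[k m]? = some a ∧ ∀ b ∈ ρ m, a ≤ b} := by
  set S := {m : ℕ | ∃ a, (ρ m)[k m]? = some a ∧ ∀ b ∈ ρ m, a ≤ b} with hS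
  by_contra hinf
  rw [Set.not_infinite] at hinf
  obtain ⟨N0, hN0⟩ := hinf.bddAbove
  set N := N0 + 1 with hN
  have hout : ∀ m, N ≤ m → ∀ a, (ρ m)[k m]? = some a → ∃ b ∈ ρ m, b < a := by
    intro m hm a ha
    have hmS : m ∉ S := fun h => by have := hN0 h; omega
    rw [hS, Set.mem_setOf_eq] at hmS
    push_neg at hmS
    obtain ⟨b, hb, hba⟩ := hmS a ha
    exact ⟨b, hb, hba⟩
  obtain ⟨μ, hμm, hμl⟩ := exists_min (ρ N) (step_ne (hstep N))
  have hμ : 0 < μ := hpos N μ hμm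
  have key : ∀ i, μ ∈ ρ (N+i) ∧ (∀ b ∈ ρ (N+i), μ ≤ b) ∧
      pot μ (ρ (N+i)) + i = pot μ (ρ N) := by
    intro i
    induction i with
    | zero => exact ⟨hμm, hμl, rfl⟩
    | succ i ih =>
      obtain ⟨h1, h2, h3⟩ := ih
      have := step_lemma hμ h1 h2
        (fun a ha => hratio (N+i) a ha μ h1) (hstep (N+i))
        (hout (N+i) (by omega))
      rw [show N+(i+1) = (N+i)+1 from rfl]
      exact ⟨this.1, this.2.1, by omega⟩
  have := (key (pot μ (ρ N) + 1)).2.2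
  omega
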